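/- Monotonicity of sharp maximal functions in dimension: for 0 < α ≤ β ≤ d there is a constant C = C(α,β,d) such that M^{#}_β f(x) ≤ C M^{#}_α f(x) for all x ∈ ℝ^d and all functions f. -/

import Mathlib

open MeasureTheory Set
open scoped ENNReal NNReal

noncomputable section

/-- `ℝ^d` with the Euclidean metric. -/
abbrev Rd (d : ℕ) := EuclideanSpace ℝ (Fin d)

/-- Coerce a plain function to a point of `ℝ^d`. -/
def toRd (d : ℕ) (a : Fin d → ℝ) : Rd d := WithLp.toLp 2 a

/-- The normalization constant `ω_β = π^{β/2}/Γ(β/2+1)`. -/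
def omegaConst (β : ℝ) : ℝ := Real.pi ^ (β / 2) / Real.Gamma (β / 2 + 1)

/-- The Hausdorff content `H^β_∞` in `ℝ^d`, via countable covers by balls. -/
def hContent (d : ℕ) (β : ℝ) (E : Set (Rd d)) : ℝ≥0∞ :=
  ⨅ (c : ℕ → Rd d × ℝ) (_ : E ⊆ ⋃ i, Metric.ball (c i).1 (c i).2),
    ∑' i, ENNReal.ofReal (omegaConst β * (c i).2 ^ β)

/-- The Choquet integral of a real-valued (nonnegative) function `g` over `Ω`
with respect to a set function `H`. -/
def choquet (d : ℕ) (H : Set (Rd d) → ℝ≥0∞) (Ω : Set (Rd d)) (g : Rd d → ℝ) : ℝ≥0∞ :=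
  ∫⁻ t in Set.Ioi (0 : ℝ), H {x | x ∈ Ω ∧ t < g x}

/-- The Choquet integral of an `ℝ≥0∞`-valued function `g` over `Ω`
with respect to a set function `H`. -/
def choquetE (d : ℕ) (H : Set (Rd d) → ℝ≥0∞) (Ω : Set (Rd d)) (g : Rd d → ℝ≥0∞) : ℝ≥0∞ :=
  ∫⁻ t in Set.Ioi (0 : ℝ), H {x | x ∈ Ω ∧ ENNReal.ofReal t < g x}

/-- Closed axis-parallel cube with corner `a` and side length `l`. -/
def cubeSet (d : ℕ) (a : Fin d → ℝ) (l : ℝ) : Set (Rd d) :=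
  {y | ∀ i, a i ≤ y i ∧ y i ≤ a i + l}

/-- Open axis-parallel cube with corner `a` and side length `l`. -/
def cubeO (d : ℕ) (a : Fin d → ℝ) (l : ℝ) : Set (Rd d) :=
  {y | ∀ i, a i < y i ∧ y i < a i + l}

/-- Side length of a dyadic cube of generation `k` in the lattice with unit size `l₀`. -/
def dSide (l₀ : ℝ) (k : ℤ) : ℝ := l₀ * 2 ^ k

/-- The dyadic cube, indexed by generation `k : ℤ` and position `m : Fin d → ℤ`,
of the dyadic lattice `D(Q₀)` generated by the cube `Q₀` with corner `a₀` and
side length `l₀`. -/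
def dSet (d : ℕ) (a₀ : Fin d → ℝ) (l₀ : ℝ) (Q : ℤ × (Fin d → ℤ)) : Set (Rd d) :=
  {y | ∀ i, a₀ i + dSide l₀ Q.1 * (Q.2 i : ℝ) ≤ y i ∧
        y i < a₀ i + dSide l₀ Q.1 * ((Q.2 i : ℝ) + 1)}

/-- The dyadic Hausdorff content `H^{β,Q₀}_∞`, via countable covers by dyadic cubes. -/
def dContent (d : ℕ) (β : ℝ) (a₀ : Fin d → ℝ) (l₀ : ℝ) (E : Set (Rd d)) : ℝ≥0∞ :=
  ⨅ (c : ℕ → ℤ × (Fin d → ℤ)) (_ : E ⊆ ⋃ i, dSet d a₀ l₀ (c i)),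
    ∑' i, ENNReal.ofReal (dSide l₀ (c i).1 ^ β)

/-- The dyadic maximal function associated with `H^{β,Q₀}_∞`. -/
def dMax (d : ℕ) (β : ℝ) (a₀ : Fin d → ℝ) (l₀ : ℝ) (f : Rd d → ℝ) (x : Rd d) : ℝ≥0∞ :=
  ⨆ (Q : ℤ × (Fin d → ℤ)) (_ : x ∈ dSet d a₀ l₀ Q),
    choquet d (dContent d β a₀ l₀) (dSet d a₀ l₀ Q) (fun y => |f y|)
      / ENNReal.ofReal (dSide l₀ Q.1 ^ β)

/-- The dyadic `β`-dimensional sharp maximal function `M^{#}_{β,Q₀}`. -/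
def dSharp (d : ℕ) (β : ℝ) (a₀ : Fin d → ℝ) (l₀ : ℝ) (f : Rd d → ℝ) (x : Rd d) : ℝ≥0∞ :=
  ⨆ (Q : ℤ × (Fin d → ℤ)) (_ : x ∈ dSet d a₀ l₀ Q),
    ⨅ (c : ℝ),
      choquet d (dContent d β a₀ l₀) (dSet d a₀ l₀ Q) (fun y => |f y - c|)
        / ENNReal.ofReal (dSide l₀ Q.1 ^ β)

/-- The `β`-dimensional sharp maximal function `M^{#}_β`, over all axis-parallel cubes. -/
def sharpMax (d : ℕ) (β : ℝ) (f : Rd d → ℝ) (x : Rd d) : ℝ≥0∞ :=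
  ⨆ (a : Fin d → ℝ) (l : ℝ) (_ : 0 < l) (_ : x ∈ cubeSet d a l),
    ⨅ (c : ℝ),
      choquet d (hContent d β) (cubeSet d a l) (fun y => |f y - c|) / ENNReal.ofReal (l ^ β)

/-- The `β`-dimensional maximal operator `M_{H^β_∞}` over balls. -/
def ballMax (d : ℕ) (β : ℝ) (f : Rd d → ℝ) (x : Rd d) : ℝ≥0∞ :=
  ⨆ (r : ℝ) (_ : 0 < r),
    choquet d (hContent d β) (Metric.ball x r) (fun y => |f y|)
      / hContent d β (Metric.ball x r)

/-- The Riesz normalization constant `γ(α)`. -/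
def rieszConst (d : ℕ) (α : ℝ) : ℝ :=
  Real.pi ^ ((d : ℝ) / 2) * 2 ^ α * Real.Gamma (α / 2) / Real.Gamma (((d : ℝ) - α) / 2)

/-- The Riesz potential `I_α μ` of a measure. -/
def rieszM (d : ℕ) (α : ℝ) (μ : Measure (Rd d)) (x : Rd d) : ℝ≥0∞ :=
  (ENNReal.ofReal (rieszConst d α))⁻¹ * ∫⁻ y, ENNReal.ofReal (dist x y ^ (α - (d : ℝ))) ∂μ

/-- The (real-valued) Riesz potential `I_α f` of a function. -/
def rieszR (d : ℕ) (α : ℝ) (f : Rd d → ℝ) (x : Rd d) : ℝ :=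
  (rieszConst d α)⁻¹ * ∫ y, f y * dist x y ^ (α - (d : ℝ))

/-- The fractional maximal function `M_α μ` of a measure. -/
def fracMaxM (d : ℕ) (α : ℝ) (μ : Measure (Rd d)) (x : Rd d) : ℝ≥0∞ :=
  ⨆ (a : Fin d → ℝ) (l : ℝ) (_ : 0 < l) (_ : x ∈ cubeSet d a l),
    μ (cubeSet d a l) * ENNReal.ofReal (l ^ (α - (d : ℝ)))

/-- The fractional maximal function `M_α f` of a function. -/
def fracMaxF (d : ℕ) (α : ℝ) (f : Rd d → ℝ) (x : Rd d) : ℝ≥0∞ :=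
  ⨆ (a : Fin d → ℝ) (l : ℝ) (_ : 0 < l) (_ : x ∈ cubeSet d a l),
    (∫⁻ y in cubeSet d a l, ENNReal.ofReal |f y|) * ENNReal.ofReal (l ^ (α - (d : ℝ)))

/-- The weak `L^{p,∞}(H^β_∞)` quasinorm. -/
def weakNorm (d : ℕ) (β : ℝ) (p : ℝ) (g : Rd d → ℝ≥0∞) : ℝ≥0∞ :=
  ⨆ (t : ℝ) (_ : 0 < t),
    ENNReal.ofReal t * hContent d β {x | ENNReal.ofReal t < g x} ^ (1 / p)

/-- The local Morrey norm `‖μ‖_{M^β(Ω)}`. -/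
def morreyNorm (d : ℕ) (β : ℝ) (μ : Measure (Rd d)) (Ω : Set (Rd d)) : ℝ≥0∞ :=
  ⨆ (x : Rd d) (_ : x ∈ Ω) (r : ℝ) (_ : 0 < r),
    μ (Metric.ball x r ∩ Ω) / ENNReal.ofReal (r ^ β)

/-- Generation-`k` cell at position `m` of a dyadic grid with generation offsets `o`. -/
def gcell (d : ℕ) (o : ℤ → Fin d → ℝ) (k : ℤ) (m : Fin d → ℤ) : Set (Rd d) :=
  {y | ∀ i, o k i + 2 ^ k * (m i : ℝ) ≤ y i ∧ y i < o k i + 2 ^ k * ((m i : ℝ) + 1)}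

/-- A dyadic grid in `ℝ^d`: each generation `k` consists of half-open cubes of side `2^k`
partitioning `ℝ^d`, and consecutive generations are nested. -/
structure DyadicGrid (d : ℕ) where
  o : ℤ → Fin d → ℝ
  nested : ∀ k m, ∃ m', gcell d o k m ⊆ gcell d o (k + 1) m'

/-- The dyadic Riesz potential `I^D_α μ` with respect to a dyadic grid. -/
def dyadicRiesz (d : ℕ) (G : DyadicGrid d) (α : ℝ) (μ : Measure (Rd d)) (x : Rd d) : ℝ≥0∞ :=
  ∑' p : ℤ × (Fin d → ℤ),
    Set.indicator (gcell d G.o p.1 p.2)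
      (fun _ => μ (gcell d G.o p.1 p.2) * ENNReal.ofReal (((2 : ℝ) ^ p.1) ^ (α - (d : ℝ)))) x

/-- The exponential on `ℝ≥0∞`. -/
def expE (t : ℝ≥0∞) : ℝ≥0∞ := if t = ∞ then ∞ else ENNReal.ofReal (Real.exp t.toReal)

/-- Positivity of the normalization constant. -/
lemma omegaConst_pos {β : ℝ} (hβ : 0 ≤ β) : 0 < omegaConst β :=
  div_pos (Real.rpow_pos_of_pos Real.pi_pos _) (Real.Gamma_pos_of_pos (by linarith))

/-- Dimension-change inequality for Hausdorff contents of sets inside a ball. -/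
lemma hContent_le_smul {d : ℕ} {α β : ℝ} (hα : 0 < α) (hαβ : α ≤ β)
    {x₀ : Rd d} {R : ℝ} (hR : 0 < R) {E : Set (Rd d)} (hE : E ⊆ Metric.ball x₀ R) :
    hContent d β E ≤
      ENNReal.ofReal (omegaConst β / omegaConst α * R ^ (β - α)) * hContent d α E := by
  have hβ : 0 < β := lt_of_lt_of_le hα hαβ
  set K := omegaConst β / omegaConst α * R ^ (β - α) with hKdef
  have hKpos : 0 < K :=
    mul_pos (div_pos (omegaConst_pos hβ.le) (omegaConst_pos hα.le))
      (Real.rpow_pos_of_pos hR _)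
  have key : ∀ (c : ℕ → Rd d × ℝ), E ⊆ ⋃ i, Metric.ball (c i).1 (c i).2 →
      hContent d β E ≤
        ENNReal.ofReal K * ∑' i, ENNReal.ofReal (omegaConst α * (c i).2 ^ α) := by
    intro c hc
    set c' : ℕ → Rd d × ℝ := fun i =>
      if (c i).2 ≤ 0 then ((c i).1, 0) else if (c i).2 ≤ R then c i else (x₀, R) with hc'def
    have hcov : E ⊆ ⋃ i, Metric.ball (c' i).1 (c' i).2 := by
      intro y hy
      obtain ⟨i, hi⟩ := Set.mem_iUnion.mp (hc hy)
      refine Set.mem_iUnion.mpr ⟨i, ?_⟩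
      by_cases h0 : (c i).2 ≤ 0
      · exact absurd (lt_of_le_of_lt dist_nonneg (Metric.mem_ball.mp hi)) (not_lt.mpr h0)
      by_cases hRle : (c i).2 ≤ R
      · simpa [hc'def, h0, hRle] using hi
      · simpa [hc'def, h0, hRle] using hE hy
    have hterm : ∀ i, ENNReal.ofReal (omegaConst β * (c' i).2 ^ β) ≤
        ENNReal.ofReal K * ENNReal.ofReal (omegaConst α * (c i).2 ^ α) := by
      intro i
      rw [← ENNReal.ofReal_mul hKpos.le]
      by_cases h0 : (c i).2 ≤ 0
      · simp only [hc'def, h0, if_true]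
        rw [Real.zero_rpow hβ.ne', mul_zero]
        simp
      push_neg at h0
      have hωα : 0 < omegaConst α * (c i).2 ^ α :=
        mul_pos (omegaConst_pos hα.le) (Real.rpow_pos_of_pos h0 _)
      have halg : K * (omegaConst α * (c i).2 ^ α)
          = omegaConst β * (R ^ (β - α) * (c i).2 ^ α) := by
        have hωα0 : omegaConst α ≠ 0 := (omegaConst_pos hα.le).ne'
        field_simp [hKdef]
        rw [hKdef]; field_simp
      have hmain : ∀ r : ℝ, 0 < r → r ≤ R → r ≤ (c i).2 →
          omegaConst β * r ^ β ≤ K * (omegaConst α * (c i).2 ^ α) := by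
        intro r hr hrR hrc
        have h1 : r ^ β ≤ R ^ (β - α) * (c i).2 ^ α := by
          have : r ^ β = r ^ (β - α) * r ^ α := by
            rw [← Real.rpow_add hr]; ring_nf
          rw [this]
          have h2 : r ^ (β - α) ≤ R ^ (β - α) :=
            Real.rpow_le_rpow hr.le hrR (by linarith)
          have h3 : r ^ α ≤ (c i).2 ^ α := Real.rpow_le_rpow hr.le hrc hα.le
          exact mul_le_mul h2 h3 (Real.rpow_pos_of_pos hr _).le
            (Real.rpow_pos_of_pos hR _).le
        calc omegaConst β * r ^ β ≤ omegaConst β * (R ^ (β - α) * (c i).2 ^ α) :=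
              mul_le_mul_of_nonneg_left h1 (omegaConst_pos hβ.le).le
          _ = K * (omegaConst α * (c i).2 ^ α) := halg.symm
      by_cases hRle : (c i).2 ≤ R
      · simp only [hc'def, not_le.mpr h0, if_false, hRle, if_true]
        exact ENNReal.ofReal_le_ofReal (hmain _ h0 hRle le_rfl)
      · push_neg at hRle
        simp only [hc'def, not_le.mpr h0, if_false, not_le.mpr hRle, if_false]
        exact ENNReal.ofReal_le_ofReal (hmain R hR le_rfl hRle.le)
    calc hContent d β E ≤ ∑' i, ENNReal.ofReal (omegaConst β * (c' i).2 ^ β) :=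
          iInf_le_of_le c' (iInf_le _ hcov)
      _ ≤ ∑' i, ENNReal.ofReal K * ENNReal.ofReal (omegaConst α * (c i).2 ^ α) :=
          ENNReal.tsum_le_tsum hterm
      _ = ENNReal.ofReal K * ∑' i, ENNReal.ofReal (omegaConst α * (c i).2 ^ α) :=
          ENNReal.tsum_mul_left
  have hK0 : ENNReal.ofReal K ≠ 0 := (ENNReal.ofReal_pos.mpr hKpos).ne' 
  have hKt : ENNReal.ofReal K ≠ ⊤ := ENNReal.ofReal_ne_top
  have h2 : hContent d β E / ENNReal.ofReal K ≤ hContent d α E := by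
    unfold hContent
    refine le_iInf₂ fun c hc => ?_
    rw [ENNReal.div_le_iff_le_mul (Or.inl hK0) (Or.inl hKt)]
    exact (key c hc).trans_eq (mul_comm _ _)
  calc hContent d β E = hContent d β E / ENNReal.ofReal K * ENNReal.ofReal K := by
        rw [ENNReal.div_mul_cancel hK0 hKt]
    _ ≤ hContent d α E * ENNReal.ofReal K := mul_le_mul_left h2 _
    _ = ENNReal.ofReal K * hContent d α E := mul_comm _ _

/-- Dimension-change inequality for Choquet integrals over sets inside a ball. -/
lemma choquet_le_smul {d : ℕ} {α β : ℝ} (hα : 0 < α) (hαβ : α ≤ β)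
    {x₀ : Rd d} {R : ℝ} (hR : 0 < R) {Ω : Set (Rd d)} (hΩ : Ω ⊆ Metric.ball x₀ R)
    (g : Rd d → ℝ) :
    choquet d (hContent d β) Ω g ≤
      ENNReal.ofReal (omegaConst β / omegaConst α * R ^ (β - α)) *
        choquet d (hContent d α) Ω g := by
  unfold choquet
  rw [← lintegral_const_mul' _ _ ENNReal.ofReal_ne_top]
  exact lintegral_mono fun t =>
    hContent_le_smul hα hαβ hR (fun y hy => hΩ hy.1)

/-- A cube of side length `l` is contained in a ball of radius `l (d+1)`. -/
lemma cubeSet_subset_ball {d : ℕ} {a : Fin d → ℝ} {l : ℝ} (hl : 0 < l) :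
    cubeSet d a l ⊆ Metric.ball (toRd d a) (l * ((d : ℝ) + 1)) := by
  intro y hy
  have hsum : ∑ i, dist (y i) (toRd d a i) ^ 2 ≤ (d : ℝ) * l ^ 2 := by
    calc ∑ i, dist (y i) (toRd d a i) ^ 2 ≤ ∑ _i : Fin d, l ^ 2 := by
          refine Finset.sum_le_sum fun i _ => ?_
          have h1 := (hy i).1
          have h2 := (hy i).2
          have habs : |y i - toRd d a i| ≤ l := abs_le.mpr ⟨by
            simp only [toRd, WithLp.ofLp_toLp] at *; linarith, by simp only [toRd, WithLp.ofLp_toLp] at *; linarith⟩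
          calc dist (y i) (toRd d a i) ^ 2 = |y i - toRd d a i| ^ 2 := by
                rw [Real.dist_eq]
            _ ≤ l ^ 2 := by nlinarith [abs_nonneg (y i - toRd d a i)]
      _ = (d : ℝ) * l ^ 2 := by simp [Finset.sum_const, Finset.card_univ, mul_comm]
  have hdist : dist y (toRd d a) ≤ Real.sqrt ((d : ℝ) * l ^ 2) := by
    rw [EuclideanSpace.dist_eq]
    exact Real.sqrt_le_sqrt hsum
  have hsq : Real.sqrt ((d : ℝ) * l ^ 2) < l * ((d : ℝ) + 1) := by
    have h1 : ((d : ℝ) * l ^ 2) < (l * ((d : ℝ) + 1)) ^ 2 := by nlinarith [Nat.cast_nonneg (α := ℝ) d]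
    calc Real.sqrt ((d : ℝ) * l ^ 2) < Real.sqrt ((l * ((d : ℝ) + 1)) ^ 2) := by
          refine Real.sqrt_lt_sqrt (by positivity) h1
      _ = l * ((d : ℝ) + 1) := Real.sqrt_sq (by positivity)
  exact Metric.mem_ball.mpr (lt_of_le_of_lt hdist hsq)

/-- Monotonicity in dimension of the sharp maximal functions. -/
theorem sharpMax_mono_dim (d : ℕ) (α β : ℝ) (hα : 0 < α) (hαβ : α ≤ β) (hβd : β ≤ d) :
    ∃ C : ℝ, 0 < C ∧
      ∀ (f : Rd d → ℝ) (x : Rd d),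
        sharpMax d β f x ≤ ENNReal.ofReal C * sharpMax d α f x := by
  classical
  have hβ : 0 < β := lt_of_lt_of_le hα hαβ
  set C := omegaConst β / omegaConst α * ((d : ℝ) + 1) ^ (β - α) with hCdef
  have hCpos : 0 < C :=
    mul_pos (div_pos (omegaConst_pos hβ.le) (omegaConst_pos hα.le))
      (Real.rpow_pos_of_pos (by positivity) _)
  refine ⟨C, hCpos, fun f x => ?_⟩
  unfold sharpMax
  refine iSup_le fun a => iSup_le fun l => iSup_le fun hl => iSup_le fun hx => ?_
  have hRpos : 0 < l * ((d : ℝ) + 1) := by positivity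
  have hsub := cubeSet_subset_ball (a := a) hl
  set A := ENNReal.ofReal (l ^ (β - α)) with hAdef
  have hA0 : A ≠ 0 := (ENNReal.ofReal_pos.mpr (Real.rpow_pos_of_pos hl _)).ne' 
  have hAt : A ≠ ⊤ := ENNReal.ofReal_ne_top
  have hKeq : ENNReal.ofReal (omegaConst β / omegaConst α * (l * ((d : ℝ) + 1)) ^ (β - α)) =
      A * ENNReal.ofReal C := by
    rw [hAdef, ← ENNReal.ofReal_mul (Real.rpow_pos_of_pos hl _).le]
    congr 1
    rw [hCdef, Real.mul_rpow hl.le (by positivity)]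
    ring
  have hlβ : ENNReal.ofReal (l ^ β) = A * ENNReal.ofReal (l ^ α) := by
    rw [hAdef, ← ENNReal.ofReal_mul (Real.rpow_pos_of_pos hl _).le, ← Real.rpow_add hl]
    ring_nf
  have hbound : ∀ c : ℝ,
      choquet d (hContent d β) (cubeSet d a l) (fun y => |f y - c|) / ENNReal.ofReal (l ^ β)
        ≤ ENNReal.ofReal C *
          (choquet d (hContent d α) (cubeSet d a l) (fun y => |f y - c|) /
            ENNReal.ofReal (l ^ α)) := by
    intro c
    have h1 := choquet_le_smul hα hαβ hRpos hsub (fun y => |f y - c|)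
    rw [hKeq] at h1
    calc choquet d (hContent d β) (cubeSet d a l) (fun y => |f y - c|) / ENNReal.ofReal (l ^ β)
        ≤ A * (ENNReal.ofReal C *
            choquet d (hContent d α) (cubeSet d a l) (fun y => |f y - c|)) /
              ENNReal.ofReal (l ^ β) := by
          refine ENNReal.div_le_div_right ?_ _
          calc choquet d (hContent d β) (cubeSet d a l) (fun y => |f y - c|)
              ≤ A * ENNReal.ofReal C *
                choquet d (hContent d α) (cubeSet d a l) (fun y => |f y - c|) := h1
            _ = A * (ENNReal.ofReal C *
                choquet d (hContent d α) (cubeSet d a l) (fun y => |f y - c|)) := by ring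
      _ = ENNReal.ofReal C *
            choquet d (hContent d α) (cubeSet d a l) (fun y => |f y - c|) /
              ENNReal.ofReal (l ^ α) := by
          rw [hlβ, ENNReal.mul_div_mul_left _ _ hA0 hAt]
      _ = ENNReal.ofReal C *
            (choquet d (hContent d α) (cubeSet d a l) (fun y => |f y - c|) /
              ENNReal.ofReal (l ^ α)) := by
          rw [mul_div_assoc]
  have hC0 : ENNReal.ofReal C ≠ 0 := (ENNReal.ofReal_pos.mpr hCpos).ne' 
  calc (⨅ c : ℝ,
        choquet d (hContent d β) (cubeSet d a l) (fun y => |f y - c|) / ENNReal.ofReal (l ^ β))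
      ≤ ⨅ c : ℝ, ENNReal.ofReal C *
          (choquet d (hContent d α) (cubeSet d a l) (fun y => |f y - c|) /
            ENNReal.ofReal (l ^ α)) := iInf_mono hbound
    _ = ENNReal.ofReal C * ⨅ c : ℝ,
          choquet d (hContent d α) (cubeSet d a l) (fun y => |f y - c|) /
            ENNReal.ofReal (l ^ α) :=
        (ENNReal.mul_iInf_of_ne hC0 ENNReal.ofReal_ne_top).symm
    _ ≤ ENNReal.ofReal C * sharpMax d α f x := by
        refine mul_le_mul_right ?_ _
        unfold sharpMax
        exact le_iSup_of_le a (le_iSup_of_le l (le_iSup_of_le hl (le_iSup_of_le hx le_rfl)))
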